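/- Fix a ∈ (−1,1)∖{0}. Then J̃(a,·) is monotonically decreasing in the absolute value of its second argument on the range below |a|: for all b, b′ ∈ (−1,1) with 0 ≤ |b| ≤ |b′| ≤ |a|, one has J̃(a, b′) ≤ J̃(a, b), and the inequality is strict whenever 0 < |b| < |b′|. -/

import Mathlib

/-- The approximate crossover rate J̃(a,b) = A(a,b)/B(a,b). -/
noncomputable def Jt (a b : ℝ) : ℝ :=
  ((1 / 2) * Real.log ((1 - b ^ 2) / (1 - a ^ 2))) ^ 2 /
    (2 * (b ^ 4 + b ^ 2) / (1 - b ^ 2) ^ 2 + 2 * (a ^ 4 + a ^ 2) / (1 - a ^ 2) ^ 2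
      - 4 * b ^ 2 * (a ^ 2 + 1) / ((1 - b ^ 2) * (1 - a ^ 2)))

/-- Reduced form of J̃ after the substitution s = (1+b²)/(1−b²), t = (1+a²)/(1−a²). -/
noncomputable def gg (t s : ℝ) : ℝ :=
  (Real.log (t + 1) - Real.log (s + 1)) ^ 2 / ((t - s) * (t - s + 1))

lemma gg_deriv_neg (t s : ℝ) (hs : -1 < s) (hst : s < t) : deriv (gg t) s < 0 := by
  have hs1 : (0:ℝ) < s + 1 := by linarith
  have ht1 : (0:ℝ) < t + 1 := by linarith
  have hd : (0:ℝ) < t - s := by linarith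
  set L : ℝ := Real.log (t + 1) - Real.log (s + 1) with hL
  have hL0 : 0 < L := sub_pos.2 (Real.log_lt_log hs1 (by linarith))
  -- key inequality : L * (s+1) < t - s
  have hkey : L * (s + 1) < t - s := by
    have h1 : Real.log ((t+1)/(s+1)) < (t+1)/(s+1) - 1 :=
      Real.log_lt_sub_one_of_pos (by positivity)
        (by
          intro hcon
          have : t + 1 = s + 1 := by
            field_simp at hcon; linarith
          linarith)
    have h2 : Real.log ((t+1)/(s+1)) = L := by
      rw [Real.log_div (by linarith) (by linarith)]
    rw [h2] at h1
    have := (mul_lt_mul_of_pos_right h1 hs1)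
    calc L * (s+1) < ((t+1)/(s+1) - 1) * (s+1) := this
      _ = t - s := by field_simp; ring
  -- derivative computation
  have hlog : HasDerivAt (fun x : ℝ => Real.log (x + 1)) (1 / (s + 1)) s := by
    have h := ((hasDerivAt_id s).add_const 1).log (by simp only [id_eq]; intro hc; linarith)
    simpa using h
  have hN : HasDerivAt (fun x : ℝ => (Real.log (t + 1) - Real.log (x + 1)) ^ 2)
      (2 * L * (-(1 / (s + 1)))) s := by
    have h := ((hasDerivAt_const s (Real.log (t + 1))).sub hlog).pow 2
    convert h using 1
    all_goals first | rfl | (rw [hL]; simp only [Pi.sub_apply]; push_cast; ring)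
  have hD : HasDerivAt (fun x : ℝ => (t - x) * (t - x + 1)) (-(2 * (t - s) + 1)) s := by
    have h := (((hasDerivAt_id s).const_sub t)).mul
      (((hasDerivAt_id s).const_sub t).add_const 1)
    convert h using 1
    all_goals first | rfl | (simp only [id_eq]; ring)
  have hD0 : (t - s) * (t - s + 1) ≠ 0 := by positivity
  have hder : HasDerivAt (gg t)
      ((2 * L * (-(1 / (s + 1))) * ((t - s) * (t - s + 1))
        - L ^ 2 * (-(2 * (t - s) + 1))) / ((t - s) * (t - s + 1)) ^ 2) s := by
    have h := hN.div hD hD0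
    exact h
  rw [hder.deriv]
  apply div_neg_of_neg_of_pos
  · have e : 2 * L * (-(1 / (s + 1))) * ((t - s) * (t - s + 1))
        - L ^ 2 * (-(2 * (t - s) + 1))
        = (L * (2 * (t - s) + 1) * (s + 1) - 2 * (t - s) * ((t - s) + 1)) * L / (s + 1) := by
      field_simp
      ring
    rw [e]
    apply div_neg_of_neg_of_pos _ hs1
    apply mul_neg_of_neg_of_pos _ hL0
    have h3 : L * (2 * (t - s) + 1) * (s + 1) < (t - s) * (2 * (t - s) + 1) := by
      have := mul_lt_mul_of_pos_right hkey (show (0:ℝ) < 2 * (t - s) + 1 by linarith)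
      nlinarith [this]
    nlinarith [hd]
  · positivity

lemma gg_anti (t : ℝ) : StrictAntiOn (gg t) (Set.Ico (0 : ℝ) t) := by
  apply strictAntiOn_of_deriv_neg (convex_Ico _ _)
  · apply ContinuousOn.div
    · apply ContinuousOn.pow
      apply ContinuousOn.sub continuousOn_const
      apply ContinuousOn.log
      · fun_prop
      · intro x hx
        have : (0:ℝ) ≤ x := hx.1
        intro h; linarith [show x + 1 = 0 from h]
    · fun_prop
    · intro x hx
      have h1 : (0:ℝ) < t - x := by linarith [hx.2]
      have h2 : (0:ℝ) < t - x + 1 := by linarith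
      positivity
  · intro x hx
    rw [interior_Ico] at hx
    exact gg_deriv_neg t x (by linarith [hx.1]) hx.2

lemma gg_le (t s s' : ℝ) (hs : 0 ≤ s) (h1 : s ≤ s') (h2 : s' ≤ t) :
    gg t s' ≤ gg t s ∧ (s < s' → gg t s' < gg t s) := by
  have hs' : (0:ℝ) ≤ s' := le_trans hs h1
  have hnonneg : 0 ≤ gg t s := by
    apply div_nonneg (sq_nonneg _)
    have : (0:ℝ) ≤ t - s := by linarith
    nlinarith
  rcases eq_or_lt_of_le h2 with heq | hlt
  · subst heq
    have h0 : gg s' s' = 0 := by simp [gg]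
    rw [h0]
    refine ⟨hnonneg, fun hss => ?_⟩
    apply div_pos
    · have h5 : Real.log (s + 1) < Real.log (s' + 1) :=
        Real.log_lt_log (by linarith) (by linarith)
      exact pow_pos (by linarith) 2
    · have hd : (0:ℝ) < s' - s := by linarith
      nlinarith
  · have hmem : s ∈ Set.Ico (0:ℝ) t := ⟨hs, lt_of_le_of_lt h1 hlt⟩
    have hmem' : s' ∈ Set.Ico (0:ℝ) t := ⟨hs', hlt⟩
    refine ⟨?_, fun h => gg_anti t hmem hmem' h⟩
    rcases eq_or_lt_of_le h1 with h | h
    · subst h; exact le_refl _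
    · exact le_of_lt (gg_anti t hmem hmem' h)

lemma Jt_eq (a b : ℝ) (ha2 : (0:ℝ) < 1 - a ^ 2) (hb2 : (0:ℝ) < 1 - b ^ 2) :
    Jt a b = gg ((1 + a ^ 2) / (1 - a ^ 2)) ((1 + b ^ 2) / (1 - b ^ 2)) / 4 := by
  set t : ℝ := (1 + a ^ 2) / (1 - a ^ 2) with hT
  set s : ℝ := (1 + b ^ 2) / (1 - b ^ 2) with hS
  have ht1 : t + 1 = 2 / (1 - a ^ 2) := by rw [hT]; field_simp; norm_num
  have hs1 : s + 1 = 2 / (1 - b ^ 2) := by rw [hS]; field_simp; norm_num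
  have hlog : Real.log (t + 1) - Real.log (s + 1) = Real.log ((1 - b ^ 2) / (1 - a ^ 2)) := by
    rw [ht1, hs1, Real.log_div two_ne_zero ha2.ne', Real.log_div two_ne_zero hb2.ne',
      Real.log_div hb2.ne' ha2.ne']
    ring
  have hden : 2 * (b ^ 4 + b ^ 2) / (1 - b ^ 2) ^ 2 + 2 * (a ^ 4 + a ^ 2) / (1 - a ^ 2) ^ 2
      - 4 * b ^ 2 * (a ^ 2 + 1) / ((1 - b ^ 2) * (1 - a ^ 2))
      = (t - s) * (t - s + 1) := by
    rw [hT, hS]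
    field_simp
    ring
  unfold Jt gg
  rw [hden, hlog]
  generalize Real.log ((1 - b ^ 2) / (1 - a ^ 2)) = l
  generalize (t - s) * (t - s + 1) = D
  ring

theorem Jt_decreasing_second (a : ℝ) (ha : a ∈ Set.Ioo (-1 : ℝ) 1) (ha0 : a ≠ 0)
    (b b' : ℝ) (hb : b ∈ Set.Ioo (-1 : ℝ) 1) (hb' : b' ∈ Set.Ioo (-1 : ℝ) 1)
    (h1 : |b| ≤ |b'|) (h2 : |b'| ≤ |a|) :
    Jt a b' ≤ Jt a b ∧ (0 < |b| → |b| < |b'| → Jt a b' < Jt a b) := by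
  have ha2 : (0:ℝ) < 1 - a ^ 2 := by nlinarith [ha.1, ha.2]
  have hb2 : (0:ℝ) < 1 - b ^ 2 := by nlinarith [hb.1, hb.2]
  have hb'2 : (0:ℝ) < 1 - b' ^ 2 := by nlinarith [hb'.1, hb'.2]
  have hsq1 : b ^ 2 ≤ b' ^ 2 := by
    have := pow_le_pow_left₀ (abs_nonneg b) h1 2
    simpa [sq_abs] using this
  have hsq2 : b' ^ 2 ≤ a ^ 2 := by
    have := pow_le_pow_left₀ (abs_nonneg b') h2 2
    simpa [sq_abs] using this
  set t : ℝ := (1 + a ^ 2) / (1 - a ^ 2) with hT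
  set s : ℝ := (1 + b ^ 2) / (1 - b ^ 2) with hS
  set s' : ℝ := (1 + b' ^ 2) / (1 - b' ^ 2) with hS'
  have hs_le : s ≤ s' := by
    rw [hS, hS', div_le_div_iff₀ hb2 hb'2]; nlinarith
  have hs'_le : s' ≤ t := by
    rw [hS', hT, div_le_div_iff₀ hb'2 ha2]; nlinarith
  have hs_pos : (0:ℝ) ≤ s := by
    rw [hS]; positivity
  have key := gg_le t s s' hs_pos hs_le hs'_le
  rw [Jt_eq a b ha2 hb2, Jt_eq a b' ha2 hb'2, ← hT, ← hS, ← hS']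
  constructor
  · have := key.1; linarith
  · intro _ hlt
    have hsq : b ^ 2 < b' ^ 2 := by
      have := pow_lt_pow_left₀ hlt (abs_nonneg b) (n := 2) (by norm_num)
      simpa [sq_abs] using this
    have hss : s < s' := by
      rw [hS, hS', div_lt_div_iff₀ hb2 hb'2]; nlinarith
    have := key.2 hss
    linarith
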